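/- Let A, B, C be convex sets of reals, each with N elements. Then the number of solutions to a + b = c with a ∈ A, b ∈ B, c ∈ C is at most C' · N^{5/3} for an absolute constant C'. -/

import Mathlib

open Finset

/-- A finite set of reals is convex if, listed in increasing order, its
consecutive differences are strictly increasing. -/
def IsConvexFinset (A : Finset ℝ) : Prop :=
  ∃ a : ℕ → ℝ,
    (∀ i j, i < j → j < A.card → a i < a j) ∧
    (∀ i, i + 2 < A.card → a (i + 1) - a i < a (i + 2) - a (i + 1)) ∧
    A = (Finset.range A.card).image a

/-- index of next element of `J` above `j` (junk value 0 if none). -/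
private def nxt (J : Finset ℕ) (j : ℕ) : ℕ :=
  if h : (J.filter (fun x => j < x)).Nonempty then (J.filter (fun x => j < x)).min' h else 0

private lemma nxt_mem {J : Finset ℕ} {j : ℕ} (h : (J.filter (fun x => j < x)).Nonempty) :
    nxt J j ∈ J ∧ j < nxt J j := by
  rw [nxt, dif_pos h]
  have := Finset.min'_mem _ h
  rw [Finset.mem_filter] at this
  exact ⟨this.1, this.2⟩

private lemma nxt_le {J : Finset ℕ} {j x : ℕ} (hx : x ∈ J) (hjx : j < x) :
    nxt J j ≤ x := by
  have hmem : x ∈ J.filter (fun y => j < y) := Finset.mem_filter.2 ⟨hx, hjx⟩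
  rw [nxt, dif_pos ⟨x, hmem⟩]
  exact Finset.min'_le _ _ hmem

/-- index of the element of `d` equal to `x` (junk value 0 if none). -/
private noncomputable def kIdx (N : ℕ) (d : ℕ → ℝ) (x : ℝ) : ℕ :=
  if h : ((Finset.range N).filter (fun κ => d κ = x)).Nonempty then
    ((Finset.range N).filter (fun κ => d κ = x)).min' h else 0

private lemma kIdx_spec {N : ℕ} {d : ℕ → ℝ} {x : ℝ} (h : ∃ κ, κ < N ∧ d κ = x) :
    kIdx N d x < N ∧ d (kIdx N d x) = x := by
  obtain ⟨κ, hκ, hdκ⟩ := h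
  have hne : ((Finset.range N).filter (fun κ => d κ = x)).Nonempty :=
    ⟨κ, Finset.mem_filter.2 ⟨Finset.mem_range.2 hκ, hdκ⟩⟩
  rw [kIdx, dif_pos hne]
  have := Finset.min'_mem _ hne
  rw [Finset.mem_filter, Finset.mem_range] at this
  exact this

section Seq

variable {N : ℕ} {d : ℕ → ℝ}

/-- strict monotonicity reflects -/
private lemma idx_lt_of_lt (hd : ∀ i j, i < j → j < N → d i < d j)
    {κ κ' : ℕ} (hκ : κ < N) (hκ' : κ' < N) (h : d κ < d κ') : κ < κ' := by
  by_contra hc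
  push_neg at hc
  rcases Nat.lt_or_ge κ' κ with h' | h'
  · exact absurd (hd κ' κ h' hκ) (by linarith)
  · have : κ = κ' := le_antisymm h' hc
    subst this; exact lt_irrefl _ h

/-- consecutive differences are strictly increasing (chained version). -/
private lemma diff_mono (hd2 : ∀ i, i + 2 < N → d (i + 1) - d i < d (i + 2) - d (i + 1)) :
    ∀ m m' : ℕ, m < m' → m' + 1 < N → d (m + 1) - d m < d (m' + 1) - d m' := by
  intro m m' hmm'
  induction m' with
  | zero => omega
  | succ n ih =>
    intro hn
    rcases Nat.lt_or_ge m n with h | h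
    · have h1 := ih h (by omega)
      have h2 := hd2 n (by omega)
      have e : n + 1 + 1 = n + 2 := by omega
      rw [e]
      linarith
    · have : m = n := by omega
      subst this
      have h2 := hd2 m (by omega)
      have e : m + 1 + 1 = m + 2 := by omega
      rw [e]
      exact h2

/-- The window map `κ ↦ d (κ + q) - d κ` is strictly monotone. -/
private lemma window_mono (hd2 : ∀ i, i + 2 < N → d (i + 1) - d i < d (i + 2) - d (i + 1))
    {q κ κ' : ℕ} (hq : 1 ≤ q) (hκκ' : κ < κ') (hκ'q : κ' + q < N) :
    d (κ + q) - d κ < d (κ' + q) - d κ' := by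
  have h1 : ∀ μ : ℕ, ∑ l ∈ Finset.range q, (d (μ + l + 1) - d (μ + l)) = d (μ + q) - d μ := by
    intro μ
    have := Finset.sum_range_sub (fun l => d (μ + l)) q
    simpa [add_assoc] using this
  rw [← h1 κ, ← h1 κ']
  apply Finset.sum_lt_sum_of_nonempty
  · exact Finset.nonempty_range_iff.2 (by omega)
  · intro l hl
    rw [Finset.mem_range] at hl
    exact diff_mono hd2 (κ + l) (κ' + l) (by omega) (by omega)

end Seq

private lemma rich (N τ : ℕ) (a b d : ℕ → ℝ) (D : Finset ℝ)
    (ha : ∀ i j, i < j → j < N → a i < a j)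
    (hb : ∀ i j, i < j → j < N → b i < b j)
    (hd : ∀ i j, i < j → j < N → d i < d j)
    (hd2 : ∀ i, i + 2 < N → d (i + 1) - d i < d (i + 2) - d (i + 1))
    (hD : ∀ x, x ∈ D ↔ ∃ κ, κ < N ∧ d κ = x)
    (hτ4 : 4 ≤ τ) (hτN : τ ≤ N) :
    ((Finset.range N).filter
        (fun i => τ ≤ ((Finset.range N).filter (fun j => a i + b j ∈ D)).card)).card * τ ^ 3
      ≤ 162 * N ^ 3 := by
  classical
  set M : ℕ := 8 * N / τ + 1 with hMdef
  set J : ℕ → Finset ℕ := fun i => (Finset.range N).filter (fun j => a i + b j ∈ D) with hJdef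
  set k : ℕ → ℕ → ℕ := fun i j => kIdx N d (a i + b j) with hkdef
  set S : Finset ℕ := (Finset.range N).filter (fun i => τ ≤ (J i).card) with hSdef
  -- basic facts
  have hJsub : ∀ i, J i ⊆ Finset.range N := fun i => Finset.filter_subset _ _
  have hkspec : ∀ i j, j ∈ J i → k i j < N ∧ d (k i j) = a i + b j := by
    intro i j hj
    rw [hJdef] at hj
    simp only [Finset.mem_filter] at hj
    exact kIdx_spec ((hD _).1 hj.2)
  have hkmono : ∀ i, ∀ j ∈ J i, ∀ j' ∈ J i, j < j' → k i j < k i j' := by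
    intro i j hj j' hj' hlt
    have h1 := hkspec i j hj
    have h2 := hkspec i j' hj'
    have hj'N : j' < N := Finset.mem_range.1 (hJsub i hj')
    have : d (k i j) < d (k i j') := by
      rw [h1.2, h2.2]
      have := hb j j' hlt hj'N
      linarith
    exact idx_lt_of_lt hd h1.1 h2.1 this
  have hkmono' : ∀ i, ∀ j ∈ J i, ∀ j' ∈ J i, j ≤ j' → k i j ≤ k i j' := by
    intro i j hj j' hj' hle
    rcases Nat.eq_or_lt_of_le hle with h | h
    · subst h; exact le_refl _
    · exact le_of_lt (hkmono i j hj j' hj' h)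
  -- the set of non-maximal elements
  set J' : ℕ → Finset ℕ :=
    fun i => (J i).filter (fun j => ((J i).filter (fun x => j < x)).Nonempty) with hJ'def
  have hJ'sub : ∀ i, J' i ⊆ J i := fun i => Finset.filter_subset _ _
  have hJ'card : ∀ i, (J i).card ≤ (J' i).card + 1 := by
    intro i
    have hsd : ((J i) \ (J' i)).card ≤ 1 := by
      rw [Finset.card_le_one]
      intro x hx y hy
      rw [Finset.mem_sdiff] at hx hy
      have hx2 : ¬ ((J i).filter (fun z => x < z)).Nonempty := by
        intro h
        exact hx.2 (Finset.mem_filter.2 ⟨hx.1, h⟩)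
      have hy2 : ¬ ((J i).filter (fun z => y < z)).Nonempty := by
        intro h
        exact hy.2 (Finset.mem_filter.2 ⟨hy.1, h⟩)
      have h1 : ¬ x < y := fun h => hx2 ⟨y, Finset.mem_filter.2 ⟨hy.1, h⟩⟩
      have h2 : ¬ y < x := fun h => hy2 ⟨x, Finset.mem_filter.2 ⟨hx.1, h⟩⟩
      omega
    have := Finset.card_sdiff_add_card_eq_card (hJ'sub i)
    omega
  -- nxt facts on J' i
  have hnxt : ∀ i, ∀ j ∈ J' i, nxt (J i) j ∈ J i ∧ j < nxt (J i) j := by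
    intro i j hj
    rw [hJ'def, Finset.mem_filter] at hj
    exact nxt_mem hj.2
  -- good and bad sets
  set Gd : ℕ → Finset ℕ := fun i => (J' i).filter
    (fun j => nxt (J i) j - j ≤ M ∧ k i (nxt (J i) j) - k i j ≤ M) with hGddef
  set Bp : ℕ → Finset ℕ := fun i => (J' i).filter (fun j => M + 1 ≤ nxt (J i) j - j) with hBpdef
  set Bq : ℕ → Finset ℕ := fun i => (J' i).filter
    (fun j => M + 1 ≤ k i (nxt (J i) j) - k i j) with hBqdef
  have hcover : ∀ i, (J' i).card ≤ (Gd i).card + ((Bp i).card + (Bq i).card) := by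
    intro i
    have hsub : J' i ⊆ Gd i ∪ (Bp i ∪ Bq i) := by
      intro j hj
      simp only [hGddef, hBpdef, hBqdef, Finset.mem_union, Finset.mem_filter]
      by_cases h1 : nxt (J i) j - j ≤ M
      · by_cases h2 : k i (nxt (J i) j) - k i j ≤ M
        · exact Or.inl ⟨hj, h1, h2⟩
        · exact Or.inr (Or.inr ⟨hj, by omega⟩)
      · exact Or.inr (Or.inl ⟨hj, by omega⟩)
    calc (J' i).card ≤ (Gd i ∪ (Bp i ∪ Bq i)).card := Finset.card_le_card hsub
      _ ≤ (Gd i).card + (Bp i ∪ Bq i).card := Finset.card_union_le _ _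
      _ ≤ (Gd i).card + ((Bp i).card + (Bq i).card) := by
          exact Nat.add_le_add_left (Finset.card_union_le _ _) _
  -- interval argument for Bp
  have hBpN : ∀ i, (M + 1) * (Bp i).card ≤ N := by
    intro i
    have hdisj : ∀ x ∈ Bp i, ∀ y ∈ Bp i, x ≠ y →
        Disjoint (Finset.Ico x (nxt (J i) x)) (Finset.Ico y (nxt (J i) y)) := by
      have key : ∀ x ∈ J' i, ∀ y ∈ J' i, x < y →
          Disjoint (Finset.Ico x (nxt (J i) x)) (Finset.Ico y (nxt (J i) y)) := by
        intro x hx y hy hxy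
        have hnle : nxt (J i) x ≤ y := nxt_le (hJ'sub i hy) hxy
        rw [Finset.disjoint_left]
        intro z hz hz'
        rw [Finset.mem_Ico] at hz hz'
        omega
      intro x hx y hy hne
      have hx' : x ∈ J' i := Finset.mem_filter.1 hx |>.1
      have hy' : y ∈ J' i := Finset.mem_filter.1 hy |>.1
      rcases Nat.lt_or_ge x y with h | h
      · exact key x hx' y hy' h
      · exact (key y hy' x hx' (by omega)).symm
    have hcard : ((Bp i).biUnion (fun j => Finset.Ico j (nxt (J i) j))).card
        = ∑ j ∈ Bp i, (Finset.Ico j (nxt (J i) j)).card := Finset.card_biUnion hdisj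
    have hsubN : (Bp i).biUnion (fun j => Finset.Ico j (nxt (J i) j)) ⊆ Finset.range N := by
      intro z hz
      rw [Finset.mem_biUnion] at hz
      obtain ⟨j, hj, hzj⟩ := hz
      rw [Finset.mem_Ico] at hzj
      have hj' : j ∈ J' i := Finset.mem_filter.1 hj |>.1
      have := Finset.mem_range.1 (hJsub i (hnxt i j hj').1)
      exact Finset.mem_range.2 (by omega)
    calc (M + 1) * (Bp i).card = ∑ _j ∈ Bp i, (M + 1) := by
          rw [Finset.sum_const, smul_eq_mul, mul_comm]
      _ ≤ ∑ j ∈ Bp i, (Finset.Ico j (nxt (J i) j)).card := by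
          apply Finset.sum_le_sum
          intro j hj
          rw [Nat.card_Ico]
          exact Finset.mem_filter.1 hj |>.2
      _ = ((Bp i).biUnion (fun j => Finset.Ico j (nxt (J i) j))).card := hcard.symm
      _ ≤ N := by simpa using Finset.card_le_card hsubN
  -- interval argument for Bq
  have hBqN : ∀ i, (M + 1) * (Bq i).card ≤ N := by
    intro i
    have hdisj : ∀ x ∈ Bq i, ∀ y ∈ Bq i, x ≠ y →
        Disjoint (Finset.Ico (k i x) (k i (nxt (J i) x)))
          (Finset.Ico (k i y) (k i (nxt (J i) y))) := by
      have key : ∀ x ∈ J' i, ∀ y ∈ J' i, x < y →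
          Disjoint (Finset.Ico (k i x) (k i (nxt (J i) x)))
            (Finset.Ico (k i y) (k i (nxt (J i) y))) := by
        intro x hx y hy hxy
        have hnle : nxt (J i) x ≤ y := nxt_le (hJ'sub i hy) hxy
        have hkle : k i (nxt (J i) x) ≤ k i y :=
          hkmono' i _ (hnxt i x hx).1 y (hJ'sub i hy) hnle
        rw [Finset.disjoint_left]
        intro z hz hz'
        rw [Finset.mem_Ico] at hz hz'
        omega
      intro x hx y hy hne
      have hx' : x ∈ J' i := Finset.mem_filter.1 hx |>.1
      have hy' : y ∈ J' i := Finset.mem_filter.1 hy |>.1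
      rcases Nat.lt_or_ge x y with h | h
      · exact key x hx' y hy' h
      · exact (key y hy' x hx' (by omega)).symm
    have hcard : ((Bq i).biUnion (fun j => Finset.Ico (k i j) (k i (nxt (J i) j)))).card
        = ∑ j ∈ Bq i, (Finset.Ico (k i j) (k i (nxt (J i) j))).card := Finset.card_biUnion hdisj
    have hsubN : (Bq i).biUnion (fun j => Finset.Ico (k i j) (k i (nxt (J i) j)))
        ⊆ Finset.range N := by
      intro z hz
      rw [Finset.mem_biUnion] at hz
      obtain ⟨j, hj, hzj⟩ := hz
      rw [Finset.mem_Ico] at hzj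
      have hj' : j ∈ J' i := Finset.mem_filter.1 hj |>.1
      have := (hkspec i _ (hnxt i j hj').1).1
      exact Finset.mem_range.2 (by omega)
    calc (M + 1) * (Bq i).card = ∑ _j ∈ Bq i, (M + 1) := by
          rw [Finset.sum_const, smul_eq_mul, mul_comm]
      _ ≤ ∑ j ∈ Bq i, (Finset.Ico (k i j) (k i (nxt (J i) j))).card := by
          apply Finset.sum_le_sum
          intro j hj
          rw [Nat.card_Ico]
          exact Finset.mem_filter.1 hj |>.2
      _ = ((Bq i).biUnion (fun j => Finset.Ico (k i j) (k i (nxt (J i) j)))).card := hcard.symm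
      _ ≤ N := by simpa using Finset.card_le_card hsubN
  -- arithmetic: 8 N ≤ τ (M+1)
  have hτpos : 0 < τ := by omega
  have h8N : 8 * N ≤ τ * (M + 1) := by
    have h1 := Nat.div_add_mod (8 * N) τ
    have h2 := Nat.mod_lt (8 * N) hτpos
    have : τ * (M + 1) = τ * (8 * N / τ) + 2 * τ := by rw [hMdef]; ring
    omega
  -- per-i good pair lower bound
  have hgood : ∀ i ∈ S, τ ≤ 2 * (Gd i).card := by
    intro i hi
    have hτJ : τ ≤ (J i).card := (Finset.mem_filter.1 hi).2
    have h1 := hJ'card i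
    have h2 := hcover i
    have h3 : 8 * (Bp i).card ≤ τ := by
      have := hBpN i
      have hm : (8 * (Bp i).card) * (M + 1) ≤ τ * (M + 1) := by
        calc (8 * (Bp i).card) * (M + 1) = 8 * ((M + 1) * (Bp i).card) := by ring
          _ ≤ 8 * N := Nat.mul_le_mul (Nat.le_refl 8) (hBpN i)
          _ ≤ τ * (M + 1) := h8N
      exact Nat.le_of_mul_le_mul_right hm (Nat.succ_pos M)
    have h4 : 8 * (Bq i).card ≤ τ := by
      have := hBqN i
      have hm : (8 * (Bq i).card) * (M + 1) ≤ τ * (M + 1) := by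
        calc (8 * (Bq i).card) * (M + 1) = 8 * ((M + 1) * (Bq i).card) := by ring
          _ ≤ 8 * N := Nat.mul_le_mul (Nat.le_refl 8) (hBqN i)
          _ ≤ τ * (M + 1) := h8N
      exact Nat.le_of_mul_le_mul_right hm (Nat.succ_pos M)
    omega
  -- the injection
  set Dm : Finset (ℕ × ℕ) := S.biUnion (fun i => (Gd i).image (fun j => (i, j))) with hDmdef
  have hDmcard : Dm.card = ∑ i ∈ S, (Gd i).card := by
    rw [hDmdef, Finset.card_biUnion]
    · apply Finset.sum_congr rfl
      intro i _
      exact Finset.card_image_of_injective _ (fun x y h => congrArg Prod.snd h)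
    · intro x hx y hy hxy
      rw [Function.onFun, Finset.disjoint_left]
      intro p hp hp'
      rw [Finset.mem_image] at hp hp'
      obtain ⟨j1, _, e1⟩ := hp
      obtain ⟨j2, _, e2⟩ := hp'
      apply hxy
      rw [← e1] at e2
      exact (congrArg Prod.fst e2).symm
  have hDmmem : ∀ p ∈ Dm, p.1 ∈ S ∧ p.2 ∈ Gd p.1 := by
    intro p hp
    rw [hDmdef, Finset.mem_biUnion] at hp
    obtain ⟨i, hi, hpi⟩ := hp
    rw [Finset.mem_image] at hpi
    obtain ⟨j, hj, e⟩ := hpi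
    rw [← e]
    exact ⟨hi, hj⟩
  have hinj : Dm.card ≤ N * (M * M) := by
    have := Finset.card_le_card_of_injOn
      (fun p : ℕ × ℕ => (p.2, nxt (J p.1) p.2 - p.2, k p.1 (nxt (J p.1) p.2) - k p.1 p.2))
      (s := Dm) (t := Finset.range N ×ˢ (Finset.Icc 1 M ×ˢ Finset.Icc 1 M))
      ?_ ?_
    · calc Dm.card ≤ (Finset.range N ×ˢ (Finset.Icc 1 M ×ˢ Finset.Icc 1 M)).card := this
        _ = N * (M * M) := by
            simp [Finset.card_product, Nat.card_Icc]
    · -- maps into target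
      intro p hp
      obtain ⟨hpS, hpGd⟩ := hDmmem p hp
      have hpJ' : p.2 ∈ J' p.1 := Finset.mem_filter.1 hpGd |>.1
      have hcond := Finset.mem_filter.1 hpGd |>.2
      have hn := hnxt p.1 p.2 hpJ'
      have hkl : k p.1 p.2 < k p.1 (nxt (J p.1) p.2) :=
        hkmono p.1 p.2 (hJ'sub p.1 hpJ') _ hn.1 hn.2
      simp only [Finset.mem_coe, Finset.mem_product, Finset.mem_range, Finset.mem_Icc]
      refine ⟨Finset.mem_range.1 (hJsub p.1 (hJ'sub p.1 hpJ')), ⟨by omega, hcond.1⟩,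
        ⟨by omega, hcond.2⟩⟩
    · -- injectivity
      intro p hp q hq he
      simp only [Finset.mem_coe] at hp hq
      obtain ⟨hpS, hpGd⟩ := hDmmem p hp
      obtain ⟨hqS, hqGd⟩ := hDmmem q hq
      have hpJ' : p.2 ∈ J' p.1 := Finset.mem_filter.1 hpGd |>.1
      have hqJ' : q.2 ∈ J' q.1 := Finset.mem_filter.1 hqGd |>.1
      have hnp := hnxt p.1 p.2 hpJ'
      have hnq := hnxt q.1 q.2 hqJ'
      simp only [Prod.mk.injEq] at he
      obtain ⟨e1, e2, e3⟩ := he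
      -- same j
      have hj : p.2 = q.2 := e1
      -- same next
      have hnn : nxt (J p.1) p.2 = nxt (J q.1) q.2 := by omega
      -- k gaps
      have hklp : k p.1 p.2 < k p.1 (nxt (J p.1) p.2) :=
        hkmono p.1 p.2 (hJ'sub p.1 hpJ') _ hnp.1 hnp.2
      have hklq : k q.1 q.2 < k q.1 (nxt (J q.1) q.2) :=
        hkmono q.1 q.2 (hJ'sub q.1 hqJ') _ hnq.1 hnq.2
      set qp : ℕ := k p.1 (nxt (J p.1) p.2) - k p.1 p.2 with hqpdef
      have hqp1 : 1 ≤ qp := by omega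
      have hkp : k p.1 (nxt (J p.1) p.2) = k p.1 p.2 + qp := by omega
      have hkq : k q.1 (nxt (J q.1) q.2) = k q.1 q.2 + qp := by omega
      -- window values agree
      have hdp := (hkspec p.1 p.2 (hJ'sub p.1 hpJ')).2
      have hdp' := (hkspec p.1 _ hnp.1).2
      have hdq := (hkspec q.1 q.2 (hJ'sub q.1 hqJ')).2
      have hdq' := (hkspec q.1 _ hnq.1).2
      have hwp : d (k p.1 p.2 + qp) - d (k p.1 p.2)
          = b (nxt (J p.1) p.2) - b p.2 := by
        rw [← hkp, hdp', hdp]; ring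
      have hwq : d (k q.1 q.2 + qp) - d (k q.1 q.2)
          = b (nxt (J q.1) q.2) - b q.2 := by
        rw [← hkq, hdq', hdq]; ring
      have hweq : d (k p.1 p.2 + qp) - d (k p.1 p.2)
          = d (k q.1 q.2 + qp) - d (k q.1 q.2) := by
        rw [hwp, hwq, hnn, hj]
      -- window injectivity
      have hkNp : k p.1 p.2 + qp < N := by
        have := (hkspec p.1 _ hnp.1).1; omega
      have hkNq : k q.1 q.2 + qp < N := by
        have := (hkspec q.1 _ hnq.1).1; omega
      have hkk : k p.1 p.2 = k q.1 q.2 := by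
        by_contra hne
        rcases Nat.lt_or_ge (k p.1 p.2) (k q.1 q.2) with h | h
        · have := window_mono hd2 hqp1 h hkNq
          linarith [hweq]
        · have h' : k q.1 q.2 < k p.1 p.2 := by omega
          have := window_mono hd2 hqp1 h' hkNp
          linarith [hweq]
      -- same a value
      have haa : a p.1 = a q.1 := by
        have : a p.1 + b p.2 = a q.1 + b q.2 := by
          rw [← hdp, ← hdq, hkk]
        rw [hj] at this
        linarith
      have hii : p.1 = q.1 := by
        have hpN : p.1 < N := Finset.mem_range.1 (Finset.mem_filter.1 hpS).1
        have hqN : q.1 < N := Finset.mem_range.1 (Finset.mem_filter.1 hqS).1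
        by_contra hne
        rcases Nat.lt_or_ge p.1 q.1 with h | h
        · have := ha p.1 q.1 h hqN; linarith
        · have h' : q.1 < p.1 := by omega
          have := ha q.1 p.1 h' hpN; linarith
      exact Prod.ext hii hj
  -- combine
  have hsum : S.card * τ ≤ 2 * (N * (M * M)) := by
    calc S.card * τ = ∑ _i ∈ S, τ := by rw [Finset.sum_const, smul_eq_mul]
      _ ≤ ∑ i ∈ S, 2 * (Gd i).card := Finset.sum_le_sum hgood
      _ = 2 * ∑ i ∈ S, (Gd i).card := by rw [Finset.mul_sum]
      _ = 2 * Dm.card := by rw [hDmcard]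
      _ ≤ 2 * (N * (M * M)) := by omega
  have hMτ : M * τ ≤ 9 * N := by
    have h1 : 8 * N / τ * τ ≤ 8 * N := Nat.div_mul_le_self _ _
    have : M * τ = 8 * N / τ * τ + τ := by rw [hMdef]; ring
    omega
  calc S.card * τ ^ 3 = (S.card * τ) * (τ * τ) := by ring
    _ ≤ (2 * (N * (M * M))) * (τ * τ) := Nat.mul_le_mul_right _ hsum
    _ = 2 * N * ((M * τ) * (M * τ)) := by ring
    _ ≤ 2 * N * ((9 * N) * (9 * N)) := by
        apply Nat.mul_le_mul_left
        exact Nat.mul_le_mul hMτ hMτ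
    _ = 162 * N ^ 3 := by ring

private lemma key (N : ℕ) (hN : 1 ≤ N) (a b d : ℕ → ℝ) (D : Finset ℝ)
    (ha : ∀ i j, i < j → j < N → a i < a j)
    (hb : ∀ i j, i < j → j < N → b i < b j)
    (hd : ∀ i j, i < j → j < N → d i < d j)
    (hd2 : ∀ i, i + 2 < N → d (i + 1) - d i < d (i + 2) - d (i + 1))
    (hD : ∀ x, x ∈ D ↔ ∃ κ, κ < N ∧ d κ = x) :
    ((((Finset.range N) ×ˢ (Finset.range N)).filter
        (fun p => a p.1 + b p.2 ∈ D)).card : ℝ) ≤ 86 * (N : ℝ) ^ ((5 : ℝ) / 3) := by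
  classical
  set R : ℕ → ℕ := fun i => ((Finset.range N).filter (fun j => a i + b j ∈ D)).card with hRdef
  set t : ℕ → ℕ := fun τ => ((Finset.range N).filter (fun i => τ + 1 ≤ R i)).card with htdef
  have hRN : ∀ i, R i ≤ N := by
    intro i
    rw [hRdef]
    calc ((Finset.range N).filter (fun j => a i + b j ∈ D)).card
        ≤ (Finset.range N).card := Finset.card_filter_le _ _
      _ = N := Finset.card_range N
  have htN : ∀ τ, t τ ≤ N := by
    intro τ
    rw [htdef]
    calc ((Finset.range N).filter (fun i => τ + 1 ≤ R i)).card
        ≤ (Finset.range N).card := Finset.card_filter_le _ _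
      _ = N := Finset.card_range N
  -- step 1: card = ∑ R i
  have hT1 : (((Finset.range N) ×ˢ (Finset.range N)).filter
      (fun p => a p.1 + b p.2 ∈ D)).card = ∑ i ∈ Finset.range N, R i := by
    rw [Finset.card_filter, Finset.sum_product]
    apply Finset.sum_congr rfl
    intro i _
    exact (Finset.card_filter _ _).symm
  -- step 2: layer cake
  have hT2 : ∑ i ∈ Finset.range N, R i = ∑ τ ∈ Finset.range N, t τ := by
    have hinner : ∀ i, R i = ∑ τ ∈ Finset.range N, (if τ + 1 ≤ R i then 1 else 0) := by
      intro i
      rw [← Finset.card_filter]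
      have : (Finset.range N).filter (fun τ => τ + 1 ≤ R i) = Finset.range (R i) := by
        ext τ
        simp only [Finset.mem_filter, Finset.mem_range]
        have := hRN i
        omega
      rw [this, Finset.card_range]
    calc ∑ i ∈ Finset.range N, R i
        = ∑ i ∈ Finset.range N, ∑ τ ∈ Finset.range N, (if τ + 1 ≤ R i then 1 else 0) := by
          exact Finset.sum_congr rfl (fun i _ => hinner i)
      _ = ∑ τ ∈ Finset.range N, ∑ i ∈ Finset.range N, (if τ + 1 ≤ R i then 1 else 0) :=
          Finset.sum_comm
      _ = ∑ τ ∈ Finset.range N, t τ := by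
          apply Finset.sum_congr rfl
          intro τ _
          exact (Finset.card_filter _ _).symm
  -- the threshold
  set K : ℕ := ⌊(N : ℝ) ^ ((2 : ℝ) / 3)⌋₊ + 4 with hKdef
  have hNR : (0 : ℝ) < N := by exact_mod_cast hN
  have hx0 : (0 : ℝ) ≤ (N : ℝ) ^ ((2 : ℝ) / 3) := Real.rpow_nonneg (le_of_lt hNR) _
  have hKge : (N : ℝ) ^ ((2 : ℝ) / 3) ≤ (K : ℝ) := by
    have := Nat.lt_floor_add_one ((N : ℝ) ^ ((2 : ℝ) / 3))
    rw [hKdef]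
    push_cast
    linarith
  have hKle : (K : ℝ) ≤ (N : ℝ) ^ ((2 : ℝ) / 3) + 4 := by
    have := Nat.floor_le hx0
    rw [hKdef]
    push_cast
    linarith
  have hK4 : 4 ≤ K := by rw [hKdef]; omega
  have hKpos : (0 : ℝ) < K := by
    have : (0:ℕ) < K := by omega
    exact_mod_cast this
  clear_value K
  -- step 3: split the sum
  have hsplit : ∑ τ ∈ Finset.range N, t τ
      = ∑ τ ∈ (Finset.range N).filter (fun τ => τ < K), t τ
        + ∑ τ ∈ (Finset.range N).filter (fun τ => ¬ τ < K), t τ :=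
    (Finset.sum_filter_add_sum_filter_not _ _ _).symm
  have hS1 : ∑ τ ∈ (Finset.range N).filter (fun τ => τ < K), t τ ≤ K * N := by
    calc ∑ τ ∈ (Finset.range N).filter (fun τ => τ < K), t τ
        ≤ ∑ _τ ∈ (Finset.range N).filter (fun τ => τ < K), N :=
          Finset.sum_le_sum (fun τ _ => htN τ)
      _ = ((Finset.range N).filter (fun τ => τ < K)).card * N := by
          rw [Finset.sum_const, smul_eq_mul]
      _ ≤ K * N := by
          apply Nat.mul_le_mul_right
          calc ((Finset.range N).filter (fun τ => τ < K)).card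
              ≤ (Finset.range K).card := Finset.card_le_card (by
                intro τ hτ
                rw [Finset.mem_filter] at hτ
                exact Finset.mem_range.2 hτ.2)
            _ = K := Finset.card_range K
  have hIco : (Finset.range N).filter (fun τ => ¬ τ < K) = Finset.Ico K N := by
    ext τ
    simp only [Finset.mem_filter, Finset.mem_range, Finset.mem_Ico]
    omega
  -- step 4: bound the tail sum in ℝ
  have htail : ∀ τ ∈ Finset.Ico K N, (t τ : ℝ) ≤ 162 * (N : ℝ) ^ 3 / ((τ : ℝ) + 1) ^ 3 := by
    intro τ hτ
    rw [Finset.mem_Ico] at hτ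
    have hrich := rich N (τ + 1) a b d D ha hb hd hd2 hD (by omega) (by omega)
    have hcast : (t τ : ℝ) * ((τ : ℝ) + 1) ^ 3 ≤ 162 * (N : ℝ) ^ 3 := by
      have : ((t τ * (τ + 1) ^ 3 : ℕ) : ℝ) ≤ ((162 * N ^ 3 : ℕ) : ℝ) := by
        exact_mod_cast hrich
      push_cast at this
      linarith
    have hpos : (0 : ℝ) < ((τ : ℝ) + 1) ^ 3 := by positivity
    rw [le_div_iff₀ hpos]
    exact hcast
  have htel : ∑ τ ∈ Finset.Ico K N, (1 : ℝ) / ((τ : ℝ) + 1) ^ 3 ≤ 1 / (2 * (K : ℝ) ^ 2) := by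
    rcases Nat.lt_or_ge K N with hKN | hKN
    · have hterm : ∀ τ ∈ Finset.Ico K N, (1 : ℝ) / ((τ : ℝ) + 1) ^ 3
          ≤ 1 / (2 * (τ : ℝ) ^ 2) - 1 / (2 * ((τ : ℝ) + 1) ^ 2) := by
        intro τ hτ
        rw [Finset.mem_Ico] at hτ
        have hτ1 : (1 : ℝ) ≤ (τ : ℝ) := by
          have : 1 ≤ τ := by omega
          exact_mod_cast this
        have h1 : (0 : ℝ) < (τ : ℝ) := by linarith
        have h2 : (0 : ℝ) < (τ : ℝ) + 1 := by linarith
        rw [div_sub_div _ _ (by positivity) (by positivity), div_le_div_iff₀ (by positivity)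
          (by positivity)]
        ring_nf
        nlinarith [sq_nonneg ((τ:ℝ)), sq_nonneg ((τ:ℝ)+1), mul_pos h1 h2]
      calc ∑ τ ∈ Finset.Ico K N, (1 : ℝ) / ((τ : ℝ) + 1) ^ 3
          ≤ ∑ τ ∈ Finset.Ico K N, (1 / (2 * (τ : ℝ) ^ 2) - 1 / (2 * ((τ : ℝ) + 1) ^ 2)) :=
            Finset.sum_le_sum hterm
        _ = 1 / (2 * (K : ℝ) ^ 2) - 1 / (2 * (N : ℝ) ^ 2) := by
            rw [Finset.sum_Ico_eq_sum_range]
            have he : K + (N - K) = N := by omega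
            calc ∑ l ∈ Finset.range (N - K),
                  (1 / (2 * ((K + l : ℕ) : ℝ) ^ 2) - 1 / (2 * (((K + l : ℕ) : ℝ) + 1) ^ 2))
                = ∑ l ∈ Finset.range (N - K),
                  (1 / (2 * ((K + l : ℕ) : ℝ) ^ 2) - 1 / (2 * ((K + (l + 1) : ℕ) : ℝ) ^ 2)) := by
                  apply Finset.sum_congr rfl
                  intro l _
                  push_cast
                  ring
              _ = 1 / (2 * ((K + 0 : ℕ) : ℝ) ^ 2) - 1 / (2 * ((K + (N - K) : ℕ) : ℝ) ^ 2) :=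
                  Finset.sum_range_sub' (fun l => 1 / (2 * ((K + l : ℕ) : ℝ) ^ 2)) (N - K)
              _ = 1 / (2 * (K : ℝ) ^ 2) - 1 / (2 * (N : ℝ) ^ 2) := by
                  rw [he]
                  try norm_num
        _ ≤ 1 / (2 * (K : ℝ) ^ 2) := by
            have : (0 : ℝ) ≤ 1 / (2 * (N : ℝ) ^ 2) := by positivity
            linarith
    · have : Finset.Ico K N = ∅ := Finset.Ico_eq_empty (by omega)
      rw [this, Finset.sum_empty]
      positivity
  have hS2 : (∑ τ ∈ Finset.Ico K N, (t τ : ℝ)) ≤ 81 * (N : ℝ) ^ 3 / (K : ℝ) ^ 2 := by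
    calc ∑ τ ∈ Finset.Ico K N, (t τ : ℝ)
        ≤ ∑ τ ∈ Finset.Ico K N, 162 * (N : ℝ) ^ 3 / ((τ : ℝ) + 1) ^ 3 :=
          Finset.sum_le_sum htail
      _ = 162 * (N : ℝ) ^ 3 * ∑ τ ∈ Finset.Ico K N, (1 : ℝ) / ((τ : ℝ) + 1) ^ 3 := by
          rw [Finset.mul_sum]
          apply Finset.sum_congr rfl
          intro τ _
          ring
      _ ≤ 162 * (N : ℝ) ^ 3 * (1 / (2 * (K : ℝ) ^ 2)) := by
          apply mul_le_mul_of_nonneg_left htel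
          positivity
      _ = 81 * (N : ℝ) ^ 3 / (K : ℝ) ^ 2 := by
          field_simp
          ring
  -- put everything together
  have hfinal : ((((Finset.range N) ×ˢ (Finset.range N)).filter
      (fun p => a p.1 + b p.2 ∈ D)).card : ℝ) ≤ (K : ℝ) * N + 81 * (N : ℝ) ^ 3 / (K : ℝ) ^ 2 := by
    rw [hT1, hT2, hsplit, hIco]
    push_cast
    have h1 : ((∑ τ ∈ (Finset.range N).filter (fun τ => τ < K), t τ : ℕ) : ℝ) ≤ (K : ℝ) * N := by
      exact_mod_cast hS1
    push_cast at h1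
    linarith [hS2]
  -- rpow arithmetic
  have hN1 : (1 : ℝ) ≤ (N : ℝ) := by exact_mod_cast hN
  have e1 : (N : ℝ) ^ ((2 : ℝ) / 3) * (N : ℝ) = (N : ℝ) ^ ((5 : ℝ) / 3) := by
    nth_rewrite 2 [← Real.rpow_one (N : ℝ)]
    rw [← Real.rpow_add hNR]
    norm_num
  have e2 : (N : ℝ) ≤ (N : ℝ) ^ ((5 : ℝ) / 3) := by
    nth_rewrite 1 [← Real.rpow_one (N : ℝ)]
    apply Real.rpow_le_rpow_of_exponent_le hN1
    norm_num
  have h43 : (N : ℝ) ^ ((4 : ℝ) / 3) ≤ (K : ℝ) ^ 2 := by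
    have h1 : ((N : ℝ) ^ ((2 : ℝ) / 3)) ^ (2 : ℕ) ≤ (K : ℝ) ^ (2 : ℕ) :=
      pow_le_pow_left₀ hx0 hKge 2
    have h2 : ((N : ℝ) ^ ((2 : ℝ) / 3)) ^ (2 : ℕ) = (N : ℝ) ^ ((4 : ℝ) / 3) := by
      rw [← Real.rpow_natCast ((N : ℝ) ^ ((2 : ℝ) / 3)) 2, ← Real.rpow_mul (le_of_lt hNR)]
      norm_num
    rw [h2] at h1
    exact h1
  have hdivN : (N : ℝ) ^ (3 : ℕ) / (N : ℝ) ^ ((4 : ℝ) / 3) = (N : ℝ) ^ ((5 : ℝ) / 3) := by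
    rw [← Real.rpow_natCast (N : ℝ) 3, ← Real.rpow_sub hNR]
    norm_num
  have e3 : 81 * (N : ℝ) ^ 3 / (K : ℝ) ^ 2 ≤ 81 * (N : ℝ) ^ ((5 : ℝ) / 3) := by
    calc 81 * (N : ℝ) ^ 3 / (K : ℝ) ^ 2
        ≤ 81 * (N : ℝ) ^ 3 / (N : ℝ) ^ ((4 : ℝ) / 3) := by
          apply div_le_div_of_nonneg_left (by positivity) (by positivity) h43
      _ = 81 * ((N : ℝ) ^ (3 : ℕ) / (N : ℝ) ^ ((4 : ℝ) / 3)) := by ring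
      _ = 81 * (N : ℝ) ^ ((5 : ℝ) / 3) := by rw [hdivN]
  have hKN2 : (K : ℝ) * N ≤ (N : ℝ) ^ ((5 : ℝ) / 3) + 4 * N := by
    calc (K : ℝ) * N ≤ ((N : ℝ) ^ ((2 : ℝ) / 3) + 4) * N :=
          mul_le_mul_of_nonneg_right hKle (le_of_lt hNR)
      _ = (N : ℝ) ^ ((2 : ℝ) / 3) * N + 4 * N := by ring
      _ = (N : ℝ) ^ ((5 : ℝ) / 3) + 4 * N := by rw [e1]
  calc ((((Finset.range N) ×ˢ (Finset.range N)).filter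
      (fun p => a p.1 + b p.2 ∈ D)).card : ℝ)
      ≤ (K : ℝ) * N + 81 * (N : ℝ) ^ 3 / (K : ℝ) ^ 2 := hfinal
    _ ≤ ((N : ℝ) ^ ((5 : ℝ) / 3) + 4 * N) + 81 * (N : ℝ) ^ ((5 : ℝ) / 3) := by linarith
    _ ≤ 86 * (N : ℝ) ^ ((5 : ℝ) / 3) := by linarith

/-- for convex sets `A, B, D` of `N` reals each, the number of
solutions to `a + b = c` with `a ∈ A`, `b ∈ B`, `c ∈ D` is at most
`C' N^{5/3}`. -/
theorem stmt15 :
    ∃ C' : ℝ, 0 < C' ∧ ∀ (N : ℕ) (A B D : Finset ℝ),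
      IsConvexFinset A → IsConvexFinset B → IsConvexFinset D →
      A.card = N → B.card = N → D.card = N →
      (((A ×ˢ B).filter (fun p => p.1 + p.2 ∈ D)).card : ℝ) ≤
        C' * (N : ℝ) ^ ((5 : ℝ) / 3) := by
  refine ⟨86, by norm_num, ?_⟩
  intro N A B D hA hB hD hAc hBc hDc
  obtain ⟨a, ha1, ha2, ha3⟩ := hA
  obtain ⟨b, hb1, hb2, hb3⟩ := hB
  obtain ⟨d, hd1, hd2, hd3⟩ := hD
  rw [hAc] at ha1 ha2 ha3
  rw [hBc] at hb1 hb2 hb3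
  rw [hDc] at hd1 hd2 hd3
  rcases Nat.eq_zero_or_pos N with hN0 | hN
  · subst hN0
    have hAe : A = ∅ := Finset.card_eq_zero.1 hAc
    rw [hAe]
    simp
  · -- injectivity of the parametrizations
    have hainj : ∀ i j, i < N → j < N → a i = a j → i = j := by
      intro i j hi hj he
      by_contra hne
      rcases Nat.lt_or_ge i j with h | h
      · exact absurd he (ne_of_lt (ha1 i j h hj))
      · have h' : j < i := by omega
        exact absurd he.symm (ne_of_lt (ha1 j i h' hi))
    have hbinj : ∀ i j, i < N → j < N → b i = b j → i = j := by
      intro i j hi hj he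
      by_contra hne
      rcases Nat.lt_or_ge i j with h | h
      · exact absurd he (ne_of_lt (hb1 i j h hj))
      · have h' : j < i := by omega
        exact absurd he.symm (ne_of_lt (hb1 j i h' hi))
    have hDiff : ∀ x, x ∈ D ↔ ∃ κ, κ < N ∧ d κ = x := by
      intro x
      rw [hd3]
      simp only [Finset.mem_image, Finset.mem_range]
    have hcard : (((Finset.range N) ×ˢ (Finset.range N)).filter
        (fun p => a p.1 + b p.2 ∈ D)).card
        = ((A ×ˢ B).filter (fun p => p.1 + p.2 ∈ D)).card := by
      apply Finset.card_bij (fun p _ => (a p.1, b p.2))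
      · intro p hp
        rw [Finset.mem_filter, Finset.mem_product] at hp
        obtain ⟨⟨hp1, hp2⟩, hp3⟩ := hp
        rw [Finset.mem_filter, Finset.mem_product]
        refine ⟨⟨?_, ?_⟩, hp3⟩
        · rw [ha3]
          exact Finset.mem_image.2 ⟨p.1, hp1, rfl⟩
        · rw [hb3]
          exact Finset.mem_image.2 ⟨p.2, hp2, rfl⟩
      · intro p hp q hq he
        rw [Finset.mem_filter, Finset.mem_product, Finset.mem_range, Finset.mem_range] at hp hq
        have e1 : a p.1 = a q.1 := congrArg Prod.fst he
        have e2 : b p.2 = b q.2 := congrArg Prod.snd he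
        exact Prod.ext (hainj _ _ hp.1.1 hq.1.1 e1) (hbinj _ _ hp.1.2 hq.1.2 e2)
      · intro y hy
        rw [Finset.mem_filter, Finset.mem_product] at hy
        obtain ⟨⟨hy1, hy2⟩, hy3⟩ := hy
        rw [ha3, Finset.mem_image] at hy1
        rw [hb3, Finset.mem_image] at hy2
        obtain ⟨i, hi, hia⟩ := hy1
        obtain ⟨j, hj, hjb⟩ := hy2
        refine ⟨(i, j), ?_, ?_⟩
        · rw [Finset.mem_filter, Finset.mem_product]
          refine ⟨⟨hi, hj⟩, ?_⟩
          simp only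
          rw [hia, hjb]
          rw [← Prod.mk.eta (p := y)] at hy3
          exact hy3
        · simp only
          rw [hia, hjb, Prod.mk.eta]
    rw [← hcard]
    exact key N hN a b d D ha1 hb1 hd1 hd2 hDiff
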